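/- The set Λ = {θ ∈ Φ_G⁺ : ⟨θ, δ_K⟩ < 0} has exactly one element, namely e_{m/2} − e_{m/2+1}, and ⟨e_{m/2} − e_{m/2+1}, δ_K⟩ = −1/(2(m+2)); moreover ‖δ_G − δ_K‖² = m/(m+2). Consequently 2‖δ_G − δ_K‖² + 4 Σ_{θ∈Λ} ⟨θ, δ_K⟩ + (4m)/8 = (m² + 6m − 4)/(2(m+2)). -/

import Mathlib

open Finset

/-- Standard basis vector `e i` of `ℝ^{m/2+2}`. -/
noncomputable def eVec (m : ℕ) (i : Fin (m / 2 + 2)) : Fin (m / 2 + 2) → ℝ := Pi.single i 1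

/-- The inner product induced by the Killing form of `Spin_{m+4}` sign-changed. -/
noncomputable def ipGr4 (m : ℕ) (μ ν : Fin (m / 2 + 2) → ℝ) : ℝ :=
  (1 / (2 * ((m : ℝ) + 2))) * ∑ k, μ k * ν k

/-- The positive roots of `Spin_{m+4}`: the `e_i − e_j` and `e_i + e_j` for `i < j`. -/
noncomputable def PosRootsGr4 (m : ℕ) : Finset (Fin (m / 2 + 2) → ℝ) :=
  ((univ ×ˢ univ : Finset (Fin (m / 2 + 2) × Fin (m / 2 + 2))).filter fun p => p.1 < p.2).image
      (fun p => eVec m p.1 - eVec m p.2) ∪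
    ((univ ×ˢ univ : Finset (Fin (m / 2 + 2) × Fin (m / 2 + 2))).filter fun p => p.1 < p.2).image
      (fun p => eVec m p.1 + eVec m p.2)

/-- `δ_G = (m/2+1, m/2, …, 1, 0)`. -/
noncomputable def deltaGGr4 (m : ℕ) : Fin (m / 2 + 2) → ℝ := fun k => ((m : ℝ) / 2 + 1) - (k : ℕ)

/-- `δ_K = Σ_{k=1}^{m/2} (m/2 − k) e_k + e_{m/2+1} = (m/2−1, m/2−2, …, 1, 0, 1, 0)`. -/
noncomputable def deltaKGr4 (m : ℕ) : Fin (m / 2 + 2) → ℝ := fun k =>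
  if (k : ℕ) = m / 2 then 1 else if (k : ℕ) = m / 2 + 1 then 0 else (m : ℝ) / 2 - 1 - (k : ℕ)

/-- The set `Λ = {θ ∈ Φ_G⁺ : ⟨θ, δ_K⟩ < 0}`. -/
noncomputable def LambdaGr4 (m : ℕ) : Finset (Fin (m / 2 + 2) → ℝ) :=
  (PosRootsGr4 m).filter fun θ => ipGr4 m θ (deltaKGr4 m) < 0

lemma sum_single_mul {N : ℕ} (i : Fin N) (ν : Fin N → ℝ) :
    ∑ k, (Pi.single i 1 : Fin N → ℝ) k * ν k = ν i := by
  rw [Finset.sum_eq_single i]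
  · simp
  · intro b _ hb; simp [Pi.single_apply, hb]
  · simp

lemma ip_sub (m : ℕ) (i j : Fin (m/2+2)) (ν : Fin (m/2+2) → ℝ) :
    ipGr4 m (eVec m i - eVec m j) ν = (1 / (2 * ((m:ℝ)+2))) * (ν i - ν j) := by
  unfold ipGr4 eVec
  congr 1
  simp only [Pi.sub_apply, sub_mul, Finset.sum_sub_distrib, sum_single_mul]

lemma ip_add (m : ℕ) (i j : Fin (m/2+2)) (ν : Fin (m/2+2) → ℝ) :
    ipGr4 m (eVec m i + eVec m j) ν = (1 / (2 * ((m:ℝ)+2))) * (ν i + ν j) := by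
  unfold ipGr4 eVec
  congr 1
  simp only [Pi.add_apply, add_mul, Finset.sum_add_distrib, sum_single_mul]

lemma half_cast (m : ℕ) (hme : Even m) : (m:ℝ)/2 = ((m/2 : ℕ) : ℝ) := by
  obtain ⟨n, hn⟩ := hme
  subst hn
  have : (n + n) / 2 = n := by omega
  rw [this]; push_cast; ring

lemma dK_small (m : ℕ) (hme : Even m) (k : Fin (m/2+2)) (hk : (k:ℕ) < m/2) :
    deltaKGr4 m k = ((m/2 : ℕ) : ℝ) - 1 - (k:ℕ) := by
  unfold deltaKGr4
  rw [if_neg (by omega), if_neg (by omega), half_cast m hme]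

lemma dK_nonneg (m : ℕ) (hme : Even m) (k : Fin (m/2+2)) : 0 ≤ deltaKGr4 m k := by
  rcases lt_trichotomy (k:ℕ) (m/2) with h | h | h
  · rw [dK_small m hme k h]
    have h1 : ((k:ℕ):ℝ) + 1 ≤ ((m/2 : ℕ):ℝ) := by exact_mod_cast Nat.succ_le_of_lt h
    linarith
  · unfold deltaKGr4; rw [if_pos h]; norm_num
  · unfold deltaKGr4
    have hk2 : (k:ℕ) = m/2 + 1 := by omega
    rw [if_neg (by omega), if_pos hk2]

/-- For `Gr̃_4(ℝ^{m+4}) = Spin_{m+4}/(Spin_m·Spin_4)`, `m` even `≥ 4`: `Λ` has exactly one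
element, `e_{m/2} − e_{m/2+1}` (1-based; 0-based indices `m/2−1` and `m/2`), with
`⟨e_{m/2} − e_{m/2+1}, δ_K⟩ = −1/(2(m+2))`; moreover `‖δ_G − δ_K‖² = m/(m+2)`; consequently
`2‖δ_G − δ_K‖² + 4Σ_{θ∈Λ}⟨θ,δ_K⟩ + (4m)/8 = (m²+6m−4)/(2(m+2))`. -/
theorem stmt11 (m : ℕ) (hm : 4 ≤ m) (hme : Even m) :
    LambdaGr4 m =
      {eVec m ⟨m / 2 - 1, by omega⟩ - eVec m ⟨m / 2, by omega⟩} ∧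
    ipGr4 m (eVec m ⟨m / 2 - 1, by omega⟩ - eVec m ⟨m / 2, by omega⟩) (deltaKGr4 m) =
      -(1 / (2 * ((m : ℝ) + 2))) ∧
    ipGr4 m (deltaGGr4 m - deltaKGr4 m) (deltaGGr4 m - deltaKGr4 m) = (m : ℝ) / ((m : ℝ) + 2) ∧
    2 * ipGr4 m (deltaGGr4 m - deltaKGr4 m) (deltaGGr4 m - deltaKGr4 m) +
        4 * (∑ θ ∈ LambdaGr4 m, ipGr4 m θ (deltaKGr4 m)) + (4 * (m : ℝ)) / 8 =
      ((m : ℝ) ^ 2 + 6 * (m : ℝ) - 4) / (2 * ((m : ℝ) + 2)) := by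
  have hmr : (0:ℝ) < (m:ℝ) + 2 := by positivity
  set c : ℝ := 1 / (2 * ((m:ℝ) + 2)) with hc
  have hcpos : 0 < c := by positivity
  have hhalf := half_cast m hme
  have hm2 : 2 ≤ m / 2 := by omega
  -- values of δ_K at the two special indices
  have hdKa : deltaKGr4 m ⟨m / 2 - 1, by omega⟩ = 0 := by
    rw [dK_small m hme _ (show m/2 - 1 < m/2 by omega)]
    rw [Nat.cast_sub (show 1 ≤ m/2 by omega), Nat.cast_one]
    ring
  have hdKb : deltaKGr4 m ⟨m / 2, by omega⟩ = 1 := by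
    unfold deltaKGr4; simp
  -- second conjunct
  have hip2 : ipGr4 m (eVec m ⟨m / 2 - 1, by omega⟩ - eVec m ⟨m / 2, by omega⟩) (deltaKGr4 m)
      = -c := by
    rw [ip_sub, hdKa, hdKb]; ring
  -- the set equality
  have hset : LambdaGr4 m =
      {eVec m ⟨m / 2 - 1, by omega⟩ - eVec m ⟨m / 2, by omega⟩} := by
    ext θ
    simp only [LambdaGr4, PosRootsGr4, mem_filter, mem_union, mem_image, mem_product,
      Finset.mem_singleton]
    constructor
    · rintro ⟨hmem, hneg⟩
      rcases hmem with ⟨⟨p1, p2⟩, hp, rfl⟩ | ⟨⟨p1, p2⟩, hp, rfl⟩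
      · -- minus case
        obtain ⟨-, hlt⟩ := hp
        rw [ip_sub] at hneg
        have hdd : deltaKGr4 m p1 < deltaKGr4 m p2 := by nlinarith
        have hij : (p1 : ℕ) < (p2 : ℕ) := hlt
        have hj2 : (p2 : ℕ) < m/2 + 2 := p2.isLt
        -- determine p2
        rcases lt_trichotomy (p2:ℕ) (m/2) with h2 | h2 | h2
        · rw [dK_small m hme _ h2, dK_small m hme _ (lt_trans hij h2)] at hdd
          have : ((p1:ℕ):ℝ) < ((p2:ℕ):ℝ) := by exact_mod_cast hij
          linarith
        · -- p2 = m/2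
          have h1 : (p1:ℕ) < m/2 := by omega
          rw [dK_small m hme _ h1] at hdd
          have hb : deltaKGr4 m p2 = 1 := by unfold deltaKGr4; rw [if_pos h2]
          rw [hb] at hdd
          have : ((m/2:ℕ):ℝ) < ((p1:ℕ):ℝ) + 2 := by linarith
          have h1' : m/2 < (p1:ℕ) + 2 := by exact_mod_cast this
          have h1e : (p1:ℕ) = m/2 - 1 := by omega
          have e1 : p1 = (⟨m/2 - 1, by omega⟩ : Fin (m/2+2)) := Fin.ext h1e
          have e2 : p2 = (⟨m/2, by omega⟩ : Fin (m/2+2)) := Fin.ext h2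
          simp only [e1, e2]
        · have h2' : (p2:ℕ) = m/2 + 1 := by omega
          have hb : deltaKGr4 m p2 = 0 := by
            unfold deltaKGr4; rw [if_neg (by omega), if_pos h2']
          rw [hb] at hdd
          exact absurd hdd (not_lt.2 (dK_nonneg m hme p1))
      · -- plus case: contradiction
        obtain ⟨-, hlt⟩ := hp
        rw [ip_add] at hneg
        have h1 := dK_nonneg m hme p1
        have h2 := dK_nonneg m hme p2
        nlinarith
    · rintro rfl
      refine ⟨Or.inl ⟨(⟨m/2 - 1, by omega⟩, ⟨m/2, by omega⟩), ⟨⟨mem_univ _, mem_univ _⟩, ?_⟩, rfl⟩, ?_⟩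
      · show (⟨m/2 - 1, by omega⟩ : Fin (m/2+2)) < ⟨m/2, by omega⟩
        simp [Fin.lt_def]; omega
      · rw [hip2]; linarith
  -- third conjunct
  have hptw : ∀ k : Fin (m/2+2),
      (deltaGGr4 m - deltaKGr4 m) k * (deltaGGr4 m - deltaKGr4 m) k
        = if (k:ℕ) < m/2 then 4 else 0 := by
    intro k
    rcases lt_trichotomy (k:ℕ) (m/2) with h | h | h
    · rw [if_pos h]
      simp only [Pi.sub_apply, deltaGGr4, dK_small m hme k h, hhalf]
      ring
    · rw [if_neg (by omega)]
      have hb : deltaKGr4 m k = 1 := by unfold deltaKGr4; rw [if_pos h]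
      simp only [Pi.sub_apply, deltaGGr4, hb, hhalf, h]
      ring
    · rw [if_neg (by omega)]
      have h' : (k:ℕ) = m/2 + 1 := by omega
      have hb : deltaKGr4 m k = 0 := by unfold deltaKGr4; rw [if_neg (by omega), if_pos h']
      simp only [Pi.sub_apply, deltaGGr4, hb, hhalf, h']
      push_cast
      ring
  have hsum : ∑ k, (deltaGGr4 m - deltaKGr4 m) k * (deltaGGr4 m - deltaKGr4 m) k
      = 2 * (m:ℝ) := by
    rw [Finset.sum_congr rfl fun k _ => hptw k]
    rw [Fin.sum_univ_eq_sum_range (fun a => if a < m/2 then (4:ℝ) else 0)]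
    rw [Finset.sum_range_succ, Finset.sum_range_succ, if_neg (by omega), if_neg (by omega)]
    rw [Finset.sum_congr rfl (fun a ha => if_pos (Finset.mem_range.1 ha)),
      Finset.sum_const, Finset.card_range]
    obtain ⟨n, hn⟩ := hme
    subst hn
    have : (n + n) / 2 = n := by omega
    rw [this]; push_cast; ring
  have hip3 : ipGr4 m (deltaGGr4 m - deltaKGr4 m) (deltaGGr4 m - deltaKGr4 m)
      = (m:ℝ) / ((m:ℝ) + 2) := by
    unfold ipGr4
    rw [hsum, ← hc]
    field_simp [hc]
    rw [hc]; field_simp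
  refine ⟨hset, hip2, hip3, ?_⟩
  rw [hip3, hset, Finset.sum_singleton, hip2, hc]
  field_simp
  ring
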